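/- Let q be a prime and let m, n be coprime positive integers with 1 ≤ n ≤ q−1, 1 ≤ m ≤ q−1, and m > n (so η = m/n satisfies 1 < η < q−1 when m/n < q−1). Then the minimum over all joint symbols (w_A, w_B) ∈ {0,…,q−1}², (w_A,w_B) ≠ (0,q−1), of |(m/n)·w_A + w_B − (q−1)| restricted to nonzero values equals 1/n. In particular, the minimum nonzero distance from the reference superimposed symbol q−1 to any other superimposed symbol is exactly 1/n. -/

import Mathlib

theorem stmt12 (q : ℕ) (hq : q.Prime) (m n : ℕ)
    (hm : 1 ≤ m ∧ m ≤ q - 1) (hn : 1 ≤ n ∧ n ≤ q - 1) (hmn : n < m)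
    (hcop : Nat.Coprime m n) (hlt : (m : ℝ) / n < (q : ℝ) - 1) :
    IsLeast {d : ℝ | ∃ wA wB : ℤ, 0 ≤ wA ∧ wA ≤ (q : ℤ) - 1 ∧ 0 ≤ wB ∧ wB ≤ (q : ℤ) - 1 ∧
        (wA, wB) ≠ (0, (q : ℤ) - 1) ∧
        d = |((m : ℝ) / n) * (wA : ℝ) + (wB : ℝ) - ((q : ℝ) - 1)| ∧ d ≠ 0}
      (1 / n) := by
  have hq2 : 2 ≤ q := hq.two_le
  have hn1 : 1 ≤ n := hn.1
  have hnZ : (0:ℤ) < (n:ℤ) := by exact_mod_cast hn1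
  have hnR : (0:ℝ) < (n:ℝ) := by exact_mod_cast hn1
  have hmZ : (1:ℤ) ≤ (m:ℤ) := by exact_mod_cast hm.1
  have hmq : (m:ℤ) ≤ (q:ℤ) - 1 := by
    have := hm.2; omega
  have hnq : (n:ℤ) ≤ (q:ℤ) - 1 := by
    have := hn.2; omega
  constructor
  · -- membership
    have hbez : (m:ℤ) * Int.gcdA m n + (n:ℤ) * Int.gcdB m n = 1 := by
      have h := Int.gcd_eq_gcd_ab (m:ℤ) (n:ℤ)
      have hg : Int.gcd (m:ℤ) (n:ℤ) = 1 := by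
        rw [Int.gcd_natCast_natCast]; exact hcop
      rw [hg] at h
      exact_mod_cast h.symm
    set x := Int.gcdA m n with hx
    set y := Int.gcdB m n with hy
    set t : ℤ := (x - 1) / n with ht
    set wA : ℤ := (x - 1) % n + 1 with hwAdef
    have hwA1 : 1 ≤ wA := by
      have := Int.emod_nonneg (x-1) (ne_of_gt hnZ); omega
    have hwAn : wA ≤ n := by
      have := Int.emod_lt_of_pos (x-1) hnZ; omega
    have hxw : wA = x - n * t := by
      have h := Int.emod_add_mul_ediv (x-1) (n:ℤ)
      rw [hwAdef, ht]; omega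
    set k : ℤ := -(y + m * t) with hkdef
    have hk : (m:ℤ) * wA = 1 + n * k := by
      rw [hxw, hkdef]; linear_combination hbez
    have hk0 : 0 ≤ k := by
      have h1 : (n:ℤ) * 0 ≤ n * k := by nlinarith
      exact le_of_mul_le_mul_left h1 hnZ
    have hkm : k < m := by
      have h1 : (n:ℤ) * k < n * m := by nlinarith
      exact lt_of_mul_lt_mul_left h1 (le_of_lt hnZ)
    refine ⟨wA, (q:ℤ) - 1 - k, by omega, by omega, by omega, by omega, ?_, ?_, ?_⟩
    · intro h
      rw [Prod.mk.injEq] at h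
      omega
    · have hkR : (m:ℝ) * wA = 1 + n * k := by exact_mod_cast hk
      have : ((m:ℝ)/n) * wA + ((((q:ℤ) - 1 - k : ℤ)):ℝ) - ((q:ℝ) - 1) = 1 / n := by
        push_cast
        field_simp
        linear_combination hkR
      rw [this, abs_of_pos (by positivity)]
    · positivity
  · -- lower bound
    rintro d ⟨wA, wB, _, _, _, _, _, hdeq, hdne⟩
    set N : ℤ := m * wA + n * wB - n * ((q:ℤ) - 1) with hN
    have hexpr : ((m:ℝ)/n) * wA + (wB:ℝ) - ((q:ℝ) - 1) = (N:ℝ) / n := by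
      rw [hN]; push_cast; field_simp
    rw [hexpr] at hdeq
    have hNne : N ≠ 0 := by
      intro h; apply hdne; rw [hdeq, h]; simp
    have h1 : (1:ℝ) ≤ |(N:ℝ)| := by
      have : (1:ℤ) ≤ |N| := Int.one_le_abs hNne
      calc (1:ℝ) ≤ ((|N|:ℤ):ℝ) := by exact_mod_cast this
        _ = |(N:ℝ)| := by push_cast; ring
    rw [hdeq, abs_div, abs_of_pos hnR]
    gcongr
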